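/- Let (G, G⁺) be a simple acyclic dimension group, η : (ℤ^J, ℤ^{J+}) → (G, G⁺) a positive group homomorphism, v an order unit of ℤ^{J+}, and s > 1 rational. Then there is K₀ ≥ 1 such that for every K ≥ K₀ there exist a 2J×J nonnegative integer matrix B and a positive group homomorphism η′ : (ℤ^{2J}, ℤ^{2J+}) → (G, G⁺) with η′ ∘ B = η and K ≤ (Bv)(j) ≤ sK for all 1 ≤ j ≤ 2J. -/

import Mathlib

/-- `P` is the positive cone of an ordered abelian group structure on `G`. -/
def IsPosCone {G : Type*} [AddCommGroup G] (P : Set G) : Prop :=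
  (∀ a ∈ P, ∀ b ∈ P, a + b ∈ P) ∧
  (∀ g : G, ∃ a ∈ P, ∃ b ∈ P, g = a - b) ∧
  (∀ a : G, a ∈ P → -a ∈ P → a = 0)

/-- The ordered group `(G, P)` is unperforated. -/
def Unperforated {G : Type*} [AddCommGroup G] (P : Set G) : Prop :=
  ∀ (n : ℕ) (g : G), 0 < n → n • g ∈ P → g ∈ P

/-- The ordered group `(G, P)` satisfies Riesz interpolation. -/
def RieszInterp {G : Type*} [AddCommGroup G] (P : Set G) : Prop :=
  ∀ a₁ a₂ b₁ b₂ : G,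
    b₁ - a₁ ∈ P → b₁ - a₂ ∈ P → b₂ - a₁ ∈ P → b₂ - a₂ ∈ P →
    ∃ c : G, c - a₁ ∈ P ∧ c - a₂ ∈ P ∧ b₁ - c ∈ P ∧ b₂ - c ∈ P

/-- `u` is an order unit for the cone `P`. -/
def IsOrderUnit {G : Type*} [AddCommGroup G] (P : Set G) (u : G) : Prop :=
  u ∈ P ∧ ∀ a : G, ∃ k : ℕ, 0 < k ∧ k • u - a ∈ P

/-- `(G, P)` is a simple dimension group: by the Effros-Handelman-Shen theorem, a
countable unperforated ordered abelian group with Riesz interpolation, in which every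
nonzero positive element is an order unit. -/
def IsSimpleDimensionGroup {G : Type*} [AddCommGroup G] (P : Set G) : Prop :=
  Countable G ∧ IsPosCone P ∧ Unperforated P ∧ RieszInterp P ∧
    ∀ g ∈ P, g ≠ 0 → IsOrderUnit P g

/-- A state on `(G, P)` with respect to the order unit `u`. -/
def IsState {G : Type*} [AddCommGroup G] (P : Set G) (u : G) (τ : G →+ ℝ) : Prop :=
  (∀ a ∈ P, 0 ≤ τ a) ∧ τ u = 1

/-- An extremal state: a state which is not a nontrivial convex combination of states. -/
def IsExtremalState {G : Type*} [AddCommGroup G] (P : Set G) (u : G) (τ : G →+ ℝ) : Prop :=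
  IsState P u τ ∧ ∀ τ₁ τ₂ : G →+ ℝ, IsState P u τ₁ → IsState P u τ₂ →
    ∀ t : ℝ, 0 < t → t < 1 → (∀ g : G, τ g = t * τ₁ g + (1 - t) * τ₂ g) → τ₁ = τ₂

/-- `G` is acyclic: it is not a cyclic group. -/
def IsAcyclic (G : Type*) [AddCommGroup G] : Prop :=
  ¬ ∃ g : G, ∀ x : G, ∃ n : ℤ, n • g = x

section Helpers
variable {G : Type*} [AddCommGroup G] {P : Set G}

lemma sumP (hP : IsPosCone P) (h0 : (0:G) ∈ P) {ι : Type*} (F : Finset ι) (f : ι → G)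
    (hf : ∀ i ∈ F, f i ∈ P) : (∑ i ∈ F, f i) ∈ P := by
  classical
  induction F using Finset.induction_on with
  | empty => simpa using h0
  | @insert a Fs ha ih =>
    rw [Finset.sum_insert ha]
    exact hP.1 _ (hf a (Finset.mem_insert_self a Fs)) _
      (ih fun i hi => hf i (Finset.mem_insert_of_mem hi))

lemma nsmulP (hP : IsPosCone P) (h0 : (0:G) ∈ P) (n : ℕ) {a : G} (ha : a ∈ P) :
    n • a ∈ P := by
  induction n with
  | zero => simpa using h0
  | succ n ih => rw [succ_nsmul]; exact hP.1 _ ih _ ha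

lemma zsmulP (hP : IsPosCone P) (h0 : (0:G) ∈ P) {n : ℤ} (hn : 0 ≤ n) {a : G} (ha : a ∈ P) :
    n • a ∈ P := by
  lift n to ℕ using hn
  rw [natCast_zsmul]
  exact nsmulP hP h0 _ ha

lemma sum_eq_zeroP (hP : IsPosCone P) (h0 : (0:G) ∈ P) {ι : Type*} (F : Finset ι) (f : ι → G)
    (hf : ∀ i ∈ F, f i ∈ P) (hsum : (∑ i ∈ F, f i) = 0) : ∀ i ∈ F, f i = 0 := by
  classical
  induction F using Finset.induction_on with
  | empty => simp
  | @insert a Fs ha ih =>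
    rw [Finset.sum_insert ha] at hsum
    have hfa : f a ∈ P := hf a (Finset.mem_insert_self a Fs)
    have hrest : (∑ i ∈ Fs, f i) ∈ P := sumP hP h0 _ _ fun i hi => hf i (Finset.mem_insert_of_mem hi)
    have hna : -(f a) ∈ P := by
      have : -(f a) = ∑ i ∈ Fs, f i := neg_eq_of_add_eq_zero_right hsum
      rw [this]; exact hrest
    have hfa0 : f a = 0 := hP.2.2 _ hfa hna
    intro i hi
    rcases Finset.mem_insert.mp hi with rfl | hi
    · exact hfa0
    · exact ih (fun i hi => hf i (Finset.mem_insert_of_mem hi)) (by rw [hfa0, zero_add] at hsum; exact hsum) i hi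

lemma sum_nsmul_right {ι : Type*} (s : Finset ι) (f : ι → ℕ) (a : G) :
    (∑ i ∈ s, f i) • a = ∑ i ∈ s, f i • a := by
  classical
  induction s using Finset.induction_on with
  | empty => simp
  | @insert b Fs hb ih =>
    rw [Finset.sum_insert hb, Finset.sum_insert hb, add_nsmul, ih]

/-- Riesz decomposition. -/
lemma RD (hR : RieszInterp P) {x a b : G} (hx : x ∈ P) (ha : a ∈ P) (hb : b ∈ P)
    (h : a + b - x ∈ P) : ∃ y z : G, y ∈ P ∧ z ∈ P ∧ a - y ∈ P ∧ b - z ∈ P ∧ x = y + z := by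
  obtain ⟨c, hc1, hc2, hc3, hc4⟩ := hR 0 (x - b) x a (by simpa using hx)
    (by simpa using hb) (by simpa using ha)
    (by have e : a - (x - b) = a + b - x := by abel
        rw [e]; exact h)
  refine ⟨c, x - c, by simpa using hc1, hc3, hc4, ?_, by abel⟩
  have : b - (x - c) = c - (x - b) := by abel
  rw [this]; exact hc2
end Helpers

section Decomp
variable {G : Type*} [AddCommGroup G] {P : Set G}

/-- List Riesz decomposition: if `0 ≤ x ≤ ∑ D l` then `x = ∑ t l` with `0 ≤ t l ≤ D l`. -/
lemma RDL (hP : IsPosCone P) (hR : RieszInterp P) (h0 : (0:G) ∈ P) {ι : Type*} [DecidableEq ι]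
    (F : Finset ι) (D : ι → G) (hD : ∀ l ∈ F, D l ∈ P) :
    ∀ x : G, x ∈ P → (∑ l ∈ F, D l) - x ∈ P →
    ∃ t : ι → G, (∀ l ∈ F, t l ∈ P ∧ D l - t l ∈ P) ∧ x = ∑ l ∈ F, t l := by
  classical
  induction F using Finset.induction_on with
  | empty =>
    intro x hx hxle
    refine ⟨fun _ => 0, by simp, ?_⟩
    simp only [Finset.sum_empty] at hxle ⊢
    have : -x ∈ P := by simpa using hxle
    exact hP.2.2 _ hx this
  | @insert a Fs ha ih =>
    intro x hx hxle
    rw [Finset.sum_insert ha] at hxle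
    have hDa : D a ∈ P := hD a (Finset.mem_insert_self a Fs)
    have hDF : ∀ l ∈ Fs, D l ∈ P := fun l hl => hD l (Finset.mem_insert_of_mem hl)
    have hsF : (∑ l ∈ Fs, D l) ∈ P := sumP hP h0 _ _ hDF
    obtain ⟨y, z, hy, hz, hay, hbz, hxyz⟩ := RD hR hx hDa hsF hxle
    obtain ⟨t', ht', hzt'⟩ := ih hDF z hz hbz
    refine ⟨fun l => if l = a then y else t' l, ?_, ?_⟩
    · intro l hl
      rcases Finset.mem_insert.mp hl with rfl | hl
      · simp only [if_pos rfl]; exact ⟨hy, hay⟩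
      · have hne : l ≠ a := fun h => ha (h ▸ hl)
        simp only [if_neg hne]; exact ht' l hl
    · rw [Finset.sum_insert ha, if_pos rfl]
      have : ∑ l ∈ Fs, (if l = a then y else t' l) = ∑ l ∈ Fs, t' l :=
        Finset.sum_congr rfl fun l hl => by
          have hne : l ≠ a := fun h => ha (h ▸ hl)
          simp [hne]
      rw [this, hxyz, hzt']

/-- Simultaneous list decomposition. -/
lemma LL (hP : IsPosCone P) (hR : RieszInterp P) (h0 : (0:G) ∈ P)
    {ι₁ : Type} [DecidableEq ι₁] {ι₂ : Type} [Fintype ι₂]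
    (F : Finset ι₁) (S : ι₁ → G) (D : ι₂ → G)
    (hS : ∀ j ∈ F, S j ∈ P) :
    ∀ Dc : ι₂ → G, (∀ l, Dc l ∈ P) → ((∑ l, Dc l) - ∑ j ∈ F, S j) ∈ P →
    ∃ σ : ι₁ → ι₂ → G, (∀ j ∈ F, (∀ l, σ j l ∈ P) ∧ S j = ∑ l, σ j l) ∧
      (∀ l, Dc l - ∑ j ∈ F, σ j l ∈ P) := by
  classical
  induction F using Finset.induction_on with
  | empty =>
    intro Dc hDc _
    exact ⟨fun _ _ => 0, by simp, by simpa using hDc⟩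
  | @insert a Fs ha ih =>
    intro Dc hDc hsub
    rw [Finset.sum_insert ha] at hsub
    have hSa : S a ∈ P := hS a (Finset.mem_insert_self a Fs)
    have hSF : ∀ j ∈ Fs, S j ∈ P := fun j hj => hS j (Finset.mem_insert_of_mem hj)
    have hFs : (∑ j ∈ Fs, S j) ∈ P := sumP hP h0 _ _ hSF
    -- extract S a from the D's
    have h1 : (∑ l, Dc l) - S a ∈ P := by
      have e : (∑ l, Dc l) - S a = ((∑ l, Dc l) - (S a + ∑ j ∈ Fs, S j)) + ∑ j ∈ Fs, S j := by abel
      rw [e]; exact hP.1 _ hsub _ hFs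
    obtain ⟨t, ht, hta⟩ := RDL hP hR h0 (Finset.univ) Dc (fun l _ => hDc l) (S a) hSa h1
    set Dc' : ι₂ → G := fun l => Dc l - t l with hDc'def
    have hDc' : ∀ l, Dc' l ∈ P := fun l => (ht l (Finset.mem_univ l)).2
    have h2 : ((∑ l, Dc' l) - ∑ j ∈ Fs, S j) ∈ P := by
      have e : (∑ l, Dc' l) = (∑ l, Dc l) - S a := by
        simp only [hDc'def, Finset.sum_sub_distrib, hta]
      rw [e]
      have e2 : (∑ l, Dc l) - S a - ∑ j ∈ Fs, S j
          = (∑ l, Dc l) - (S a + ∑ j ∈ Fs, S j) := by abel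
      rw [e2]; exact hsub
    obtain ⟨σ', hσ'1, hσ'2⟩ := ih hSF Dc' hDc' h2
    refine ⟨fun j => if j = a then t else σ' j, ?_, ?_⟩
    · intro j hj
      rcases Finset.mem_insert.mp hj with rfl | hj
      · simp only [if_pos rfl]
        exact ⟨fun l => (ht l (Finset.mem_univ l)).1, hta⟩
      · have hne : j ≠ a := fun h => ha (h ▸ hj)
        simp only [if_neg hne]; exact hσ'1 j hj
    · intro l
      rw [Finset.sum_insert ha]
      show Dc l - ((if a = a then t else σ' a) l + ∑ j ∈ Fs, (if j = a then t else σ' j) l) ∈ P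
      rw [if_pos rfl]
      have e : ∑ j ∈ Fs, (if j = a then t else σ' j) l = ∑ j ∈ Fs, σ' j l :=
        Finset.sum_congr rfl fun j hj => by
          have hne : j ≠ a := fun h => ha (h ▸ hj)
          simp [hne]
      rw [e]
      have e2 : Dc l - (t l + ∑ j ∈ Fs, σ' j l) = Dc' l - ∑ j ∈ Fs, σ' j l := by
        simp only [hDc'def]; abel
      rw [e2]; exact hσ'2 l
end Decomp

section Kill
variable {G : Type*} [AddCommGroup G] {P : Set G}

/-- Kernel killing for relations `m • (∑ S) = ∑ D`. -/
lemma KILL (hP : IsPosCone P) (hR : RieszInterp P) (h0 : (0:G) ∈ P) :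
    ∀ (m : ℕ) (ι₁ : Type) [Fintype ι₁] (ι₂ : Type) [Fintype ι₂]
      (S : ι₁ → G) (D : ι₂ → G),
      (∀ j, S j ∈ P) → (∀ l, D l ∈ P) → m • (∑ j, S j) = (∑ l, D l) →
      ∃ (κ : Type) (_ : Fintype κ) (g : κ → G) (A : ι₁ ⊕ ι₂ → κ → ℕ),
        (∀ u, g u ∈ P) ∧
        (∀ j, S j = ∑ u, A (Sum.inl j) u • g u) ∧
        (∀ l, D l = ∑ u, A (Sum.inr l) u • g u) ∧
        (∀ u, m * (∑ j, A (Sum.inl j) u) = ∑ l, A (Sum.inr l) u) := by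
  intro m
  induction m with
  | zero =>
    intro ι₁ _ ι₂ _ S D hS hD hrel
    classical
    have hD0 : ∀ l, D l = 0 := by
      intro l
      have := sum_eq_zeroP hP h0 (Finset.univ) D (fun l _ => hD l)
        (by rw [← hrel, zero_nsmul])
      exact this l (Finset.mem_univ l)
    refine ⟨ι₁, inferInstance, S, fun x u => match x with
      | Sum.inl j => if u = j then 1 else 0
      | Sum.inr _ => 0, hS, ?_, ?_, ?_⟩
    · intro j
      have : ∀ u, (if u = j then (1:ℕ) else 0) • S u = (if u = j then S u else 0) := by
        intro u; split <;> simp_all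
      simp only [this, Finset.sum_ite_eq' Finset.univ j S, Finset.mem_univ, if_pos]
    · intro l; simp [hD0 l]
    · intro u; simp
  | succ m ih =>
    intro ι₁ _ ι₂ _ S D hS hD hrel
    classical
    have hSsum : (∑ j, S j) ∈ P := sumP hP h0 _ _ fun j _ => hS j
    have hsub : ((∑ l, D l) - ∑ j, S j) ∈ P := by
      have e : (∑ l, D l) - ∑ j, S j = m • (∑ j, S j) := by
        rw [← hrel, succ_nsmul]; abel
      rw [e]; exact nsmulP hP h0 m hSsum
    obtain ⟨σ, hσ1, hσ2⟩ := LL hP hR h0 (Finset.univ) S D (fun j _ => hS j) D hD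
      (by simpa using hsub)
    have hσP : ∀ j l, σ j l ∈ P := fun j l => (hσ1 j (Finset.mem_univ j)).1 l
    have hσS : ∀ j, S j = ∑ l, σ j l := fun j => (hσ1 j (Finset.mem_univ j)).2
    set D' : ι₂ → G := fun l => D l - ∑ j, σ j l with hD'def
    have hD' : ∀ l, D' l ∈ P := by simpa using hσ2
    set σ' : ι₁ × ι₂ → G := fun p => σ p.1 p.2 with hσ'def
    have hσsum : (∑ p : ι₁ × ι₂, σ' p) = ∑ j, S j := by
      rw [Fintype.sum_prod_type]
      exact Finset.sum_congr rfl fun j _ => (hσS j).symm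
    have hrel' : m • (∑ p : ι₁ × ι₂, σ' p) = ∑ l, D' l := by
      rw [hσsum]
      have e : ∑ l, D' l = (∑ l, D l) - ∑ l, ∑ j, σ j l := by
        simp only [hD'def, Finset.sum_sub_distrib]
      have e2 : ∑ l, ∑ j, σ j l = ∑ j, S j := by
        rw [Finset.sum_comm]
        exact Finset.sum_congr rfl fun j _ => (hσS j).symm
      rw [e, e2, ← hrel, succ_nsmul]; abel
    obtain ⟨κ, hκ, g, A', hg, hA'1, hA'2, hA'3⟩ :=
      ih (ι₁ × ι₂) ι₂ σ' D' (fun p => hσP p.1 p.2) hD' hrel'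
    refine ⟨κ, hκ, g, fun x u => match x with
      | Sum.inl j => ∑ l, A' (Sum.inl (j, l)) u
      | Sum.inr l => (∑ j, A' (Sum.inl (j, l)) u) + A' (Sum.inr l) u, hg, ?_, ?_, ?_⟩
    · intro j
      rw [hσS j]
      calc ∑ l, σ j l = ∑ l, ∑ u, A' (Sum.inl (j, l)) u • g u :=
            Finset.sum_congr rfl fun l _ => hA'1 (j, l)
        _ = ∑ u, ∑ l, A' (Sum.inl (j, l)) u • g u := Finset.sum_comm
        _ = ∑ u, (∑ l, A' (Sum.inl (j, l)) u) • g u := by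
            exact Finset.sum_congr rfl fun u _ => (sum_nsmul_right _ _ _).symm
    · intro l
      have e : D l = (∑ j, σ j l) + D' l := by simp only [hD'def]; abel
      rw [e]
      have e1 : ∑ j, σ j l = ∑ u, (∑ j, A' (Sum.inl (j, l)) u) • g u := by
        calc ∑ j, σ j l = ∑ j, ∑ u, A' (Sum.inl (j, l)) u • g u :=
              Finset.sum_congr rfl fun j _ => hA'1 (j, l)
          _ = ∑ u, ∑ j, A' (Sum.inl (j, l)) u • g u := Finset.sum_comm
          _ = ∑ u, (∑ j, A' (Sum.inl (j, l)) u) • g u :=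
              Finset.sum_congr rfl fun u _ => (sum_nsmul_right _ _ _).symm
      rw [e1, hA'2 l, ← Finset.sum_add_distrib]
      exact Finset.sum_congr rfl fun u _ => (add_nsmul (g u) _ _).symm
    · intro u
      have hih := hA'3 u
      rw [Fintype.sum_prod_type] at hih
      have lhs : (m + 1) * (∑ j, ∑ l, A' (Sum.inl (j, l)) u)
          = (∑ j, ∑ l, A' (Sum.inl (j, l)) u) + m * (∑ j, ∑ l, A' (Sum.inl (j, l)) u) := by ring
      rw [lhs, hih]
      rw [Finset.sum_add_distrib]
      congr 1
      exact Finset.sum_comm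
end Kill

section Small
variable {G : Type*} [AddCommGroup G] {P : Set G}

/-- Any nonzero positive element in a simple acyclic dimension group splits nontrivially. -/
lemma exists_split (hP : IsPosCone P) (hR : RieszInterp P) (h0 : (0:G) ∈ P)
    (hsimp : ∀ g ∈ P, g ≠ 0 → IsOrderUnit P g) (hac : IsAcyclic G)
    {w : G} (hw : w ∈ P) (hw0 : w ≠ 0) :
    ∃ x, x ∈ P ∧ x ≠ 0 ∧ w - x ∈ P ∧ w - x ≠ 0 := by
  classical
  by_contra hcon
  push_neg at hcon
  -- every element of [0,w] is 0 or w
  have hdich : ∀ x, x ∈ P → w - x ∈ P → x = 0 ∨ x = w := by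
    intro x hx hwx
    by_cases hx0 : x = 0
    · exact Or.inl hx0
    · right
      have h1 : w - x = 0 := hcon x hx hx0 hwx
      have h2 : w = x := by rwa [sub_eq_zero] at h1
      exact h2.symm
  -- every positive element is a natural multiple of w
  have hmul : ∀ p, p ∈ P → ∃ n : ℕ, p = n • w := by
    intro p hp
    obtain ⟨k, hk, hkp⟩ := (hsimp w hw hw0).2 p
    have hsum : (∑ _l : Fin k, w) - p ∈ P := by
      simpa [Finset.sum_const, Finset.card_univ] using hkp
    obtain ⟨t, ht, htp⟩ := RDL hP hR h0 (Finset.univ) (fun _ : Fin k => w)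
      (fun _ _ => hw) p hp hsum
    have hd : ∀ i : Fin k, t i = 0 ∨ t i = w := fun i =>
      hdich (t i) (ht i (Finset.mem_univ i)).1 (ht i (Finset.mem_univ i)).2
    refine ⟨(Finset.univ.filter (fun i : Fin k => t i = w)).card, ?_⟩
    rw [htp, ← Finset.sum_filter_add_sum_filter_not Finset.univ (fun i => t i = w)]
    have e1 : ∑ i ∈ Finset.univ.filter (fun i : Fin k => t i = w), t i
        = (Finset.univ.filter (fun i : Fin k => t i = w)).card • w := by
      rw [Finset.sum_congr rfl (fun i hi => (Finset.mem_filter.mp hi).2), Finset.sum_const]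
    have e2 : ∑ i ∈ Finset.univ.filter (fun i : Fin k => ¬ (t i = w)), t i = 0 := by
      apply Finset.sum_eq_zero
      intro i hi
      rcases hd i with h | h
      · exact h
      · exact absurd h (Finset.mem_filter.mp hi).2
    rw [e1, e2, add_zero]
  -- G is cyclic, contradiction
  apply hac
  refine ⟨w, fun x => ?_⟩
  obtain ⟨a, haP, b, hbP, hab⟩ := hP.2.1 x
  obtain ⟨n₁, hn₁⟩ := hmul a haP
  obtain ⟨n₂, hn₂⟩ := hmul b hbP
  refine ⟨(n₁ : ℤ) - n₂, ?_⟩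
  rw [hab, hn₁, hn₂, sub_zsmul, natCast_zsmul, natCast_zsmul]; abel

/-- Common nonzero lower bound of two nonzero positive elements. -/
lemma common_lower (hP : IsPosCone P) (hR : RieszInterp P) (h0 : (0:G) ∈ P)
    (hsimp : ∀ g ∈ P, g ≠ 0 → IsOrderUnit P g)
    {x y : G} (hx : x ∈ P) (hx0 : x ≠ 0) (hy : y ∈ P) (hy0 : y ≠ 0) :
    ∃ d, d ∈ P ∧ d ≠ 0 ∧ x - d ∈ P ∧ y - d ∈ P := by
  classical
  obtain ⟨k, hk, hkx⟩ := (hsimp y hy hy0).2 x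
  have hsum : (∑ _l : Fin k, y) - x ∈ P := by
    simpa [Finset.sum_const, Finset.card_univ] using hkx
  obtain ⟨t, ht, htx⟩ := RDL hP hR h0 (Finset.univ) (fun _ : Fin k => y)
    (fun _ _ => hy) x hx hsum
  have hex : ∃ i : Fin k, t i ≠ 0 := by
    by_contra hall
    push_neg at hall
    apply hx0
    rw [htx]
    exact Finset.sum_eq_zero fun i _ => hall i
  obtain ⟨i₀, hi₀⟩ := hex
  refine ⟨t i₀, (ht i₀ (Finset.mem_univ i₀)).1, hi₀, ?_, (ht i₀ (Finset.mem_univ i₀)).2⟩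
  have e : x - t i₀ = ∑ i ∈ Finset.univ.erase i₀, t i := by
    rw [htx, ← Finset.add_sum_erase Finset.univ t (Finset.mem_univ i₀)]
    abel
  rw [e]
  exact sumP hP h0 _ _ fun i hi => (ht i (Finset.mem_erase.mp hi).2).1

/-- Small order units: for every `k` there is a nonzero positive `z` with `k • z ≤ w`. -/
lemma small_units (hP : IsPosCone P) (hR : RieszInterp P) (h0 : (0:G) ∈ P)
    (hsimp : ∀ g ∈ P, g ≠ 0 → IsOrderUnit P g) (hac : IsAcyclic G)
    {w : G} (hw : w ∈ P) (hw0 : w ≠ 0) (k : ℕ) :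
    ∃ z, z ∈ P ∧ z ≠ 0 ∧ w - k • z ∈ P := by
  -- halving
  have hhalf : ∀ u, u ∈ P → u ≠ 0 → ∃ z, z ∈ P ∧ z ≠ 0 ∧ u - 2 • z ∈ P := by
    intro u hu hu0
    obtain ⟨x, hx, hx0, hux, hux0⟩ := exists_split hP hR h0 hsimp hac hu hu0
    obtain ⟨d, hd, hd0, hxd, huxd⟩ := common_lower hP hR h0 hsimp hx hx0 hux hux0
    refine ⟨d, hd, hd0, ?_⟩
    have e : u - 2 • d = (x - d) + ((u - x) - d) := by
      rw [two_nsmul]; abel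
    rw [e]; exact hP.1 _ hxd _ huxd
  -- powers of two
  have hpow : ∀ j : ℕ, ∃ z, z ∈ P ∧ z ≠ 0 ∧ w - (2 ^ j) • z ∈ P := by
    intro j
    induction j with
    | zero => exact ⟨w, hw, hw0, by simp [h0]⟩
    | succ j ihj =>
      obtain ⟨z, hz, hz0, hwz⟩ := ihj
      obtain ⟨y, hy, hy0, hzy⟩ := hhalf z hz hz0
      refine ⟨y, hy, hy0, ?_⟩
      have e : w - (2 ^ (j+1)) • y = (w - (2 ^ j) • z) + (2 ^ j) • (z - 2 • y) := by
        rw [smul_sub, ← mul_nsmul', pow_succ]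
        abel
      rw [e]
      exact hP.1 _ hwz _ (nsmulP hP h0 _ hzy)
  obtain ⟨z, hz, hz0, hwz⟩ := hpow k
  refine ⟨z, hz, hz0, ?_⟩
  have hk2 : k ≤ 2 ^ k := Nat.le_of_lt (Nat.lt_two_pow_self (n := k))
  have e : w - k • z = (w - (2 ^ k) • z) + ((2 ^ k - k) • z) := by
    rw [sub_nsmul z hk2]; abel
  rw [e]
  exact hP.1 _ hwz _ (nsmulP hP h0 _ hz)
end Small

section DivLemma
variable {G : Type*} [AddCommGroup G] {P : Set G}

lemma natdiv_sandwich (c M : ℕ) (hM : M = 0 ∨ c * c ≤ M) :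
    ∃ α β : ℕ, c * α + (c + 1) * β = M := by
  rcases hM with rfl | hM
  · exact ⟨0, 0, by simp⟩
  · set T := (M + c) / (c + 1) with hT
    have hdm := Nat.div_add_mod (M + c) (c + 1)
    rw [← hT] at hdm
    set X := (c + 1) * T with hX
    set R := (M + c) % (c + 1) with hR
    have hmlt : R < c + 1 := Nat.mod_lt _ (by omega)
    have h1 : M ≤ X := by omega
    have h2a : X ≤ M + c := by omega
    have h2 : c * T ≤ M := by
      have e1 : c * X ≤ c * (M + c) := Nat.mul_le_mul_left c h2a
      have e2 : c * (M + c) ≤ M * (c + 1) := by nlinarith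
      have e3 : (c * T) * (c + 1) ≤ M * (c + 1) := by
        calc (c * T) * (c + 1) = c * ((c + 1) * T) := by ring
          _ = c * X := by rw [hX]
          _ ≤ c * (M + c) := e1
          _ ≤ M * (c + 1) := e2
      exact Nat.le_of_mul_le_mul_right e3 (by omega)
    refine ⟨X - M, M - c * T, ?_⟩
    have hXeq : X = (c + 1) * T := hX
    zify [h1, h2]
    rw [hXeq]
    push_cast
    ring

/-- The division lemma: in a simple acyclic dimension group, every positive element
can be written as `c • a + (c+1) • b` with `a b` positive. -/
lemma DL (hP : IsPosCone P) (hR : RieszInterp P) (h0 : (0:G) ∈ P)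
    (hsimp : ∀ g ∈ P, g ≠ 0 → IsOrderUnit P g) (hac : IsAcyclic G)
    {w : G} (hw : w ∈ P) (c : ℕ) :
    ∃ a b : G, a ∈ P ∧ b ∈ P ∧ w = c • a + (c + 1) • b := by
  classical
  by_cases hw0 : w = 0
  · exact ⟨0, 0, h0, h0, by simp [hw0]⟩
  set k := c * (c + 1) with hk
  obtain ⟨z, hz, hz0, hr⟩ := small_units hP hR h0 hsimp hac hw hw0 k
  set r := w - k • z with hrdef
  obtain ⟨N, hN, hNz⟩ := (hsimp z hz hz0).2 r
  set s := N • z - r with hsdef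
  have hsP : s ∈ P := hNz
  have hrel : N • (∑ _j : Unit, z) = ∑ l : Bool, (if l then r else s) := by
    rw [Fintype.sum_bool]
    simp only [if_pos, if_neg Bool.false_ne_true]
    simp only [Finset.sum_const, Finset.card_univ, Fintype.card_unit, one_smul]
    rw [hsdef]; abel
  obtain ⟨κ, hκ, g, A, hg, hA1, hA2, hA3⟩ := KILL hP hR h0 N Unit Bool
    (fun _ => z) (fun l => if l then r else s) (fun _ => hz)
    (fun l => by split <;> [exact hr; exact hsP]) hrel
  letI := hκ
  set az : κ → ℕ := A (Sum.inl ()) with haz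
  set ar : κ → ℕ := A (Sum.inr true) with har
  set as' : κ → ℕ := A (Sum.inr false) with has
  have hz_eq : z = ∑ u, az u • g u := hA1 ()
  have hr_eq : r = ∑ u, ar u • g u := by
    have := hA2 true; simpa using this
  have hpt : ∀ u, N * az u = ar u + as' u := by
    intro u
    have := hA3 u
    simpa [Fintype.sum_bool] using this
  set M : κ → ℕ := fun u => k * az u + ar u with hM
  have hwM : w = ∑ u, M u • g u := by
    have hw_eq : w = k • z + r := by rw [hrdef]; abel
    rw [hw_eq, hz_eq, hr_eq, Finset.smul_sum, ← Finset.sum_add_distrib]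
    refine Finset.sum_congr rfl fun u _ => ?_
    rw [smul_smul, ← add_nsmul]
  have hMcase : ∀ u, M u = 0 ∨ c * c ≤ M u := by
    intro u
    by_cases h : az u = 0
    · left
      have := hpt u
      rw [h, Nat.mul_zero] at this
      have har0 : ar u = 0 := by omega
      simp [hM, h, har0]
    · right
      have h1 : 1 ≤ az u := Nat.one_le_iff_ne_zero.mpr h
      have : k ≤ k * az u := Nat.le_mul_of_pos_right k h1
      have hck : c * c ≤ k := by rw [hk]; exact Nat.mul_le_mul_left c (by omega)
      calc c * c ≤ k := hck
        _ ≤ k * az u := this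
        _ ≤ k * az u + ar u := Nat.le_add_right _ _
  choose α β hαβ using fun u => natdiv_sandwich c (M u) (hMcase u)
  refine ⟨∑ u, α u • g u, ∑ u, β u • g u,
    sumP hP h0 _ _ (fun u _ => nsmulP hP h0 _ (hg u)),
    sumP hP h0 _ _ (fun u _ => nsmulP hP h0 _ (hg u)), ?_⟩
  rw [hwM, Finset.smul_sum, Finset.smul_sum, ← Finset.sum_add_distrib]
  refine Finset.sum_congr rfl fun u _ => ?_
  rw [smul_smul, smul_smul, ← add_nsmul, hαβ u]
end DivLemma


/-- Proposition 3.2. -/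
theorem stmt16 {G : Type*} [AddCommGroup G] (P : Set G)
    (hG : IsSimpleDimensionGroup P) (hac : IsAcyclic G)
    (J : ℕ) (hJ : 0 < J)
    (η : (Fin J → ℤ) →+ G) (hη : ∀ x : Fin J → ℤ, (∀ j, 0 ≤ x j) → η x ∈ P)
    (v : Fin J → ℤ) (hv : ∀ j, 0 < v j)
    (s : ℚ) (hs : 1 < s) :
    ∃ K₀ : ℕ, 0 < K₀ ∧ ∀ K : ℕ, K₀ ≤ K →
      ∃ (B : Fin (2 * J) → Fin J → ℤ) (η' : (Fin (2 * J) → ℤ) →+ G),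
        (∀ i j, 0 ≤ B i j) ∧
        (∀ x : Fin (2 * J) → ℤ, (∀ i, 0 ≤ x i) → η' x ∈ P) ∧
        (∀ x : Fin J → ℤ, η' (fun i => ∑ j, B i j * x j) = η x) ∧
        ∀ i, (K : ℚ) ≤ ((∑ j, B i j * v j : ℤ) : ℚ) ∧
          ((∑ j, B i j * v j : ℤ) : ℚ) ≤ s * K := by
  classical
  obtain ⟨hcount, hP, hunp, hR, hsimp⟩ := hG
  have h0 : (0:G) ∈ P := by
    have := hη 0 (fun j => le_refl 0)
    simpa using this
  set vna : Fin J → ℕ := fun j => (v j).toNat with hvna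
  have hvpos : ∀ j, 1 ≤ vna j := by
    intro j; have := hv j; simp only [hvna]; omega
  have hvcast : ∀ j, (vna j : ℤ) = v j := fun j => Int.toNat_of_nonneg (le_of_lt (hv j))
  set L : ℕ := ∏ j, vna j with hLdef
  have hL1 : 1 ≤ L := Finset.one_le_prod' (fun j _ => hvpos j)
  have hvdvd : ∀ j, vna j ∣ L := fun j => Finset.dvd_prod_of_mem vna (Finset.mem_univ j)
  have hvL : ∀ j, vna j ≤ L := fun j => Nat.le_of_dvd (by omega) (hvdvd j)
  refine ⟨max L (⌈(2 * (L:ℚ)) / (s - 1)⌉₊) + 1, by omega, ?_⟩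
  intro K hK
  -- the target row value T
  set T : ℕ := L * (K / L) + L with hTdef
  have hdvdT : ∀ j, vna j ∣ T := fun j =>
    dvd_add (Dvd.dvd.mul_right (hvdvd j) _) (hvdvd j)
  have hKT : K < T := by
    have hdm := Nat.div_add_mod K L
    have hml : K % L < L := Nat.mod_lt _ (by omega)
    simp only [hTdef]
    set X := L * (K / L)
    omega
  have hTK : T ≤ K + L := by
    have hdm := Nat.div_add_mod K L
    simp only [hTdef]
    set X := L * (K / L)
    omega
  have hLT : L ≤ T := by simp only [hTdef]; omega
  set c : Fin J → ℕ := fun j => T / vna j with hcdef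
  have hcv : ∀ j, c j * vna j = T := fun j => Nat.div_mul_cancel (hdvdT j)
  -- the division lemma applied to each η δ_j
  have hwj : ∀ j : Fin J, η (fun j' => if j = j' then 1 else 0) ∈ P := by
    intro j
    apply hη
    intro j'
    split <;> omega
  choose a b haP hbP hab using fun j : Fin J =>
    DL hP hR h0 hsimp hac (hwj j) (c j)
  -- the index equivalence
  have hJJ : J + J = 2 * J := by omega
  set e : (Fin J ⊕ Fin J) ≃ Fin (2 * J) := finSumFinEquiv.trans (finCongr hJJ) with hedef
  set Bm : Fin (2 * J) → Fin J → ℤ := fun i =>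
    Sum.elim (fun (j : Fin J) (j' : Fin J) => if j' = j then (c j : ℤ) else 0)
      (fun (j : Fin J) (j' : Fin J) => if j' = j then (c j : ℤ) + 1 else 0) (e.symm i) with hBm
  set F : (Fin (2 * J) → ℤ) → G := fun x =>
    (∑ j, x (e (Sum.inl j)) • a j) + (∑ j, x (e (Sum.inr j)) • b j) with hFdef
  have hFadd : ∀ x y, F (x + y) = F x + F y := by
    intro x y
    simp only [hFdef, Pi.add_apply, add_zsmul, Finset.sum_add_distrib]
    abel
  -- the key quantitative bound
  have hsK : (K:ℚ) + 2 * (L:ℚ) ≤ s * K := by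
    have hs1 : (0:ℚ) < s - 1 := by linarith
    have h1 : (2 * (L:ℚ)) / (s - 1) ≤ (K : ℚ) := by
      calc (2 * (L:ℚ)) / (s - 1) ≤ (⌈(2 * (L:ℚ)) / (s - 1)⌉₊ : ℚ) := Nat.le_ceil _
        _ ≤ (K : ℚ) := by
            have : ⌈(2 * (L:ℚ)) / (s - 1)⌉₊ ≤ K := by omega
            exact_mod_cast this
    rw [div_le_iff₀ hs1] at h1
    nlinarith [h1]
  refine ⟨Bm, AddMonoidHom.mk' F hFadd, ?_, ?_, ?_, ?_⟩
  · -- entries nonnegative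
    intro i j
    simp only [hBm]
    cases e.symm i with
    | inl j₀ => simp only [Sum.elim_inl]; split <;> positivity
    | inr j₀ => simp only [Sum.elim_inr]; split <;> positivity
  · -- positivity of η'
    intro x hx
    show F x ∈ P
    simp only [hFdef]
    refine hP.1 _ (sumP hP h0 _ _ fun j _ => ?_) _ (sumP hP h0 _ _ fun j _ => ?_)
    · exact zsmulP hP h0 (hx _) (haP j)
    · exact zsmulP hP h0 (hx _) (hbP j)
  · -- factorization η' ∘ B = η
    intro x
    show F (fun i => ∑ j, Bm i j * x j) = η x
    have hcol1 : ∀ j : Fin J, (∑ j', Bm (e (Sum.inl j)) j' * x j') = (c j : ℤ) * x j := by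
      intro j
      simp only [hBm, Equiv.symm_apply_apply, Sum.elim_inl]
      simp only [ite_mul, zero_mul]
      simp [Finset.sum_ite_eq' Finset.univ j (fun j' => (c j : ℤ) * x j')]
    have hcol2 : ∀ j : Fin J, (∑ j', Bm (e (Sum.inr j)) j' * x j') = ((c j : ℤ) + 1) * x j := by
      intro j
      simp only [hBm, Equiv.symm_apply_apply, Sum.elim_inr]
      simp only [ite_mul, zero_mul]
      simp [Finset.sum_ite_eq' Finset.univ j (fun j' => ((c j : ℤ) + 1) * x j')]
    have hηx : η x = ∑ j, x j • η (fun j' => if j = j' then 1 else 0) := by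
      conv_lhs => rw [pi_eq_sum_univ x]
      rw [map_sum]
      exact Finset.sum_congr rfl fun j _ => by rw [map_zsmul]
    simp only [hFdef, hcol1, hcol2, hηx]
    rw [← Finset.sum_add_distrib]
    refine Finset.sum_congr rfl fun j _ => ?_
    rw [hab j]
    have e1 : (c j : ℕ) • a j = ((c j : ℤ)) • a j := (natCast_zsmul (a j) (c j)).symm
    have e2 : ((c j : ℕ) + 1) • b j = ((c j : ℤ) + 1) • b j := by
      rw [← natCast_zsmul]
      push_cast
      ring_nf
    rw [smul_add, e1, e2, smul_smul, smul_smul, mul_comm (x j) _, mul_comm (x j) _]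
  · -- row bounds
    intro i
    have hTb1 : (K:ℚ) ≤ ((T:ℕ):ℚ) := by exact_mod_cast le_of_lt hKT
    have hTb2 : ∀ j : Fin J, ((T:ℕ):ℚ) + ((vna j : ℕ):ℚ) ≤ s * K := by
      intro j
      have h1 : (T:ℚ) + (vna j : ℚ) ≤ (K:ℚ) + 2 * (L:ℚ) := by
        have e1 : (T:ℚ) ≤ (K:ℚ) + (L:ℚ) := by exact_mod_cast hTK
        have e2 : (vna j : ℚ) ≤ (L:ℚ) := by exact_mod_cast hvL j
        linarith
      linarith [hsK]
    have hrow : (∑ j, Bm i j * v j) = (T : ℤ) ∨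
        ∃ j₀ : Fin J, (∑ j, Bm i j * v j) = (T : ℤ) + (vna j₀ : ℤ) := by
      simp only [hBm]
      cases e.symm i with
      | inl j₀ =>
        left
        simp only [Sum.elim_inl]
        simp only [ite_mul, zero_mul]
        rw [Finset.sum_ite_eq' Finset.univ j₀ (fun j' => (c j₀ : ℤ) * v j')]
        simp only [Finset.mem_univ, if_pos]
        rw [← hvcast j₀]
        exact_mod_cast congrArg (fun n : ℕ => (n : ℤ)) (hcv j₀)
      | inr j₀ =>
        right
        refine ⟨j₀, ?_⟩
        simp only [Sum.elim_inr]
        simp only [ite_mul, zero_mul]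
        rw [Finset.sum_ite_eq' Finset.univ j₀ (fun j' => ((c j₀ : ℤ) + 1) * v j')]
        simp only [Finset.mem_univ, if_pos]
        rw [← hvcast j₀, add_mul, one_mul]
        have : (c j₀ : ℤ) * (vna j₀ : ℤ) = (T : ℤ) := by exact_mod_cast congrArg (fun n : ℕ => (n : ℤ)) (hcv j₀)
        rw [this]
    rcases hrow with h | ⟨j₀, h⟩
    · rw [h]
      constructor
      · exact_mod_cast hTb1
      · have : ((T:ℕ):ℚ) ≤ s * K := by
          have := hTb2 ⟨0, hJ⟩
          have hv0 : (0:ℚ) ≤ ((vna ⟨0, hJ⟩ : ℕ):ℚ) := by positivity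
          linarith
        exact_mod_cast this
    · rw [h]
      constructor
      · have : (K:ℚ) ≤ ((T:ℕ):ℚ) + ((vna j₀ : ℕ):ℚ) := by
          have hv0 : (0:ℚ) ≤ ((vna j₀ : ℕ):ℚ) := by positivity
          linarith
        exact_mod_cast this
      · have := hTb2 j₀
        exact_mod_cast this
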